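/- The dual objective H(p,q) = (1/2)(‖d − β𝓛(p,q)‖² − ‖H_C(d − β𝓛(p,q))‖²) + β[Tr(pᵀE₁) + Tr(qᵀE₂)] has gradient ∇H(p,q) = −β𝓛ᵀ(P_C(d − β𝓛(p,q))) + β(E₁, E₂), and this gradient is Lipschitz continuous with constant at most 8β². -/

import Mathlib

open Finset


noncomputable section

/-- Extension of `p ∈ ℝ^{(h-1)×w}` by zero outside its index range. -/
def pE (h w : ℕ) (p : Fin (h - 1) → Fin w → ℝ) (i j : ℕ) : ℝ :=
  if hij : i < h - 1 ∧ j < w then p ⟨i, hij.1⟩ ⟨j, hij.2⟩ else 0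

/-- Extension of `q ∈ ℝ^{h×(w-1)}` by zero outside its index range. -/
def qE (h w : ℕ) (q : Fin h → Fin (w - 1) → ℝ) (i j : ℕ) : ℝ :=
  if hij : i < h ∧ j < w - 1 then q ⟨i, hij.1⟩ ⟨j, hij.2⟩ else 0

/-- The operator `𝓛(p,q)_{i,j} = p_{i-1,j} + q_{i,j-1} - p_{i,j} - q_{i,j}`
with the zero boundary conventions. -/
def Lop (h w : ℕ) (p : Fin (h - 1) → Fin w → ℝ) (q : Fin h → Fin (w - 1) → ℝ) :
    Fin h → Fin w → ℝ := fun i j =>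
  (if i.1 = 0 then 0 else pE h w p (i.1 - 1) j.1) +
    (if j.1 = 0 then 0 else qE h w q i.1 (j.1 - 1)) -
      pE h w p i.1 j.1 - qE h w q i.1 j.1

/-- First component of `𝓛ᵀ L`: vertical forward differences. -/
def LtP (h w : ℕ) (L : Fin h → Fin w → ℝ) : Fin (h - 1) → Fin w → ℝ :=
  fun i j => L ⟨i.1 + 1, by omega⟩ j - L ⟨i.1, by omega⟩ j

/-- Second component of `𝓛ᵀ L`: horizontal forward differences. -/
def LtQ (h w : ℕ) (L : Fin h → Fin w → ℝ) : Fin h → Fin (w - 1) → ℝ :=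
  fun i j => L i ⟨j.1 + 1, by omega⟩ - L i ⟨j.1, by omega⟩


/-- Entrywise clamping to `[0,1]`: the projection onto `C = {0 ≤ L ≤ 1}`. -/
def clampC (h w : ℕ) (L : Fin h → Fin w → ℝ) : Fin h → Fin w → ℝ :=
  fun i j => min 1 (max 0 (L i j))

lemma cl_sq (s t : ℝ) : (min 1 (max 0 s) - min 1 (max 0 t))^2 ≤ (s-t)^2 := by
  simp only [min_def, max_def]
  split_ifs <;> nlinarith

lemma phi_bound (s t : ℝ) :
    |(1/2) * (s^2 - (s - min 1 (max 0 s))^2) - (1/2) * (t^2 - (t - min 1 (max 0 t))^2)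
      - min 1 (max 0 t) * (s - t)| ≤ (1/2) * (s - t)^2 := by
  rw [abs_le]
  constructor <;> (simp only [min_def, max_def]; split_ifs <;> nlinarith)


def mE (n m : ℕ) (L : Fin n → Fin m → ℝ) (i j : ℕ) : ℝ :=
  if hij : i < n ∧ j < m then L ⟨i, hij.1⟩ ⟨j, hij.2⟩ else 0

lemma pE_eq (h w : ℕ) (p : Fin (h-1) → Fin w → ℝ) : pE h w p = mE (h-1) w p := rfl
lemma qE_eq (h w : ℕ) (q : Fin h → Fin (w-1) → ℝ) : qE h w q = mE h (w-1) q := rfl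

lemma mE_apply {n m : ℕ} (L : Fin n → Fin m → ℝ) (a : Fin n) (b : Fin m) :
    mE n m L a.1 b.1 = L a b := by
  simp [mE, a.isLt, b.isLt]

lemma mE_sub {n m : ℕ} (p p' : Fin n → Fin m → ℝ) (i j : ℕ) :
    mE n m (fun a b => p a b - p' a b) i j = mE n m p i j - mE n m p' i j := by
  by_cases hij : i < n ∧ j < m <;> simp [mE, hij]

lemma sq4 (A B C D : ℝ) : (A + B - C - D)^2 ≤ 4*(A^2+B^2+C^2+D^2) := by
  nlinarith [sq_nonneg (A-B), sq_nonneg (A+C), sq_nonneg (A+D), sq_nonneg (B+C),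
    sq_nonneg (B+D), sq_nonneg (C-D)]

/-- the `𝓛` operator on ℕ-indices -/
def LopN (h w : ℕ) (p : Fin (h - 1) → Fin w → ℝ) (q : Fin h → Fin (w - 1) → ℝ)
    (i j : ℕ) : ℝ :=
  (if i = 0 then 0 else pE h w p (i - 1) j) +
    (if j = 0 then 0 else qE h w q i (j - 1)) -
      pE h w p i j - qE h w q i j

lemma oneD (n : ℕ) (a e : ℕ → ℝ) (he : e n = 0) :
    ∑ i ∈ range (n+1), a i * ((if i = 0 then 0 else e (i-1)) - e i)
      = ∑ i ∈ range n, (a (i+1) - a i) * e i := by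
  simp only [mul_sub]
  rw [sum_sub_distrib,
    Finset.sum_range_succ' (fun i => a i * (if i = 0 then 0 else e (i-1))) n,
    Finset.sum_range_succ]
  norm_num [he, Nat.succ_ne_zero]
  rw [← sum_sub_distrib]
  exact Finset.sum_congr rfl fun i _ => by ring

lemma oneD_sq (n : ℕ) (e : ℕ → ℝ) :
    ∑ i ∈ range (n+1), (if i = 0 then 0 else e (i-1))^2 = ∑ i ∈ range n, (e i)^2 := by
  rw [Finset.sum_range_succ' (fun i => (if i = 0 then 0 else e (i-1))^2) n]
  simp

lemma oneD_sq' (n : ℕ) (e : ℕ → ℝ) (he : e n = 0) :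
    ∑ i ∈ range (n+1), (e i)^2 = ∑ i ∈ range n, (e i)^2 := by
  rw [Finset.sum_range_succ]; simp [he]

lemma adj (h w : ℕ) (hh : 0 < h) (hw : 0 < w) (M : ℕ → ℕ → ℝ)
    (p : Fin (h-1) → Fin w → ℝ) (q : Fin h → Fin (w-1) → ℝ) :
    ∑ i ∈ range h, ∑ j ∈ range w, M i j * LopN h w p q i j
      = (∑ i ∈ range (h-1), ∑ j ∈ range w, (M (i+1) j - M i j) * pE h w p i j)
        + ∑ i ∈ range h, ∑ j ∈ range (w-1), (M i (j+1) - M i j) * qE h w q i j := by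
  have split : ∀ i j, M i j * LopN h w p q i j
      = M i j * ((if i = 0 then 0 else pE h w p (i-1) j) - pE h w p i j)
        + M i j * ((if j = 0 then 0 else qE h w q i (j-1)) - qE h w q i j) := by
    intro i j; unfold LopN; ring
  simp only [split, Finset.sum_add_distrib]
  congr 1
  · rw [Finset.sum_comm]
    rw [Finset.sum_comm (s := range (h-1))]
    refine Finset.sum_congr rfl fun j hj => ?_
    rw [show range h = range (h-1+1) by rw [Nat.sub_add_cancel hh]]
    exact oneD (h-1) (fun i => M i j) (fun i => pE h w p i j)
      (by have : ¬((h:ℕ) - 1 < h - 1 ∧ j < w) := by omega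
          simp [pE, this])
  · refine Finset.sum_congr rfl fun i hi => ?_
    rw [show range w = range (w-1+1) by rw [Nat.sub_add_cancel hw]]
    exact oneD (w-1) (fun j => M i j) (fun j => qE h w q i j)
      (by have : ¬(i < h ∧ (w:ℕ) - 1 < w - 1) := by omega
          simp [qE, this])

lemma lop_bound (h w : ℕ) (hh : 0 < h) (hw : 0 < w)
    (p : Fin (h-1) → Fin w → ℝ) (q : Fin h → Fin (w-1) → ℝ) :
    ∑ i ∈ range h, ∑ j ∈ range w, (LopN h w p q i j)^2
      ≤ 8 * ((∑ i ∈ range (h-1), ∑ j ∈ range w, (pE h w p i j)^2)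
          + ∑ i ∈ range h, ∑ j ∈ range (w-1), (qE h w q i j)^2) := by
  have step1 : ∑ i ∈ range h, ∑ j ∈ range w, (LopN h w p q i j)^2
      ≤ ∑ i ∈ range h, ∑ j ∈ range w,
        (4 * ((if i = 0 then 0 else pE h w p (i-1) j)^2
          + (if j = 0 then 0 else qE h w q i (j-1))^2
          + (pE h w p i j)^2 + (qE h w q i j)^2)) := by
    refine Finset.sum_le_sum fun i _ => Finset.sum_le_sum fun j _ => ?_
    unfold LopN
    exact sq4 _ _ _ _
  refine step1.trans ?_
  have hA : ∑ i ∈ range h, ∑ j ∈ range w, (if i = 0 then 0 else pE h w p (i-1) j)^2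
      = ∑ i ∈ range (h-1), ∑ j ∈ range w, (pE h w p i j)^2 := by
    rw [Finset.sum_comm, Finset.sum_comm (s := range (h-1))]
    refine Finset.sum_congr rfl fun j hj => ?_
    rw [show range h = range (h-1+1) by rw [Nat.sub_add_cancel hh]]
    exact oneD_sq (h-1) (fun i => pE h w p i j)
  have hC : ∑ i ∈ range h, ∑ j ∈ range w, (pE h w p i j)^2
      = ∑ i ∈ range (h-1), ∑ j ∈ range w, (pE h w p i j)^2 := by
    rw [Finset.sum_comm, Finset.sum_comm (s := range (h-1))]
    refine Finset.sum_congr rfl fun j hj => ?_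
    rw [show range h = range (h-1+1) by rw [Nat.sub_add_cancel hh]]
    exact oneD_sq' (h-1) (fun i => pE h w p i j)
      (by have : ¬((h:ℕ) - 1 < h - 1 ∧ j < w) := by omega
          simp [pE, this])
  have hB : ∑ i ∈ range h, ∑ j ∈ range w, (if j = 0 then 0 else qE h w q i (j-1))^2
      = ∑ i ∈ range h, ∑ j ∈ range (w-1), (qE h w q i j)^2 := by
    refine Finset.sum_congr rfl fun i hi => ?_
    rw [show range w = range (w-1+1) by rw [Nat.sub_add_cancel hw]]
    exact oneD_sq (w-1) (fun j => qE h w q i j)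
  have hD : ∑ i ∈ range h, ∑ j ∈ range w, (qE h w q i j)^2
      = ∑ i ∈ range h, ∑ j ∈ range (w-1), (qE h w q i j)^2 := by
    refine Finset.sum_congr rfl fun i hi => ?_
    rw [show range w = range (w-1+1) by rw [Nat.sub_add_cancel hw]]
    exact oneD_sq' (w-1) (fun j => qE h w q i j)
      (by have : ¬(i < h ∧ (w:ℕ) - 1 < w - 1) := by omega
          simp [qE, this])
  have expand : ∑ i ∈ range h, ∑ j ∈ range w,
      (4 * ((if i = 0 then 0 else pE h w p (i-1) j)^2
        + (if j = 0 then 0 else qE h w q i (j-1))^2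
        + (pE h w p i j)^2 + (qE h w q i j)^2))
      = 4 * ((∑ i ∈ range h, ∑ j ∈ range w, (if i = 0 then 0 else pE h w p (i-1) j)^2)
        + (∑ i ∈ range h, ∑ j ∈ range w, (if j = 0 then 0 else qE h w q i (j-1))^2)
        + (∑ i ∈ range h, ∑ j ∈ range w, (pE h w p i j)^2)
        + (∑ i ∈ range h, ∑ j ∈ range w, (qE h w q i j)^2)) := by
    simp only [mul_add, Finset.sum_add_distrib, Finset.mul_sum]
  rw [expand, hA, hB, hC, hD]
  linarith

lemma lt_bound (h w : ℕ) (hh : 0 < h) (hw : 0 < w) (M : ℕ → ℕ → ℝ) :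
    (∑ i ∈ range (h-1), ∑ j ∈ range w, (M (i+1) j - M i j)^2)
      + ∑ i ∈ range h, ∑ j ∈ range (w-1), (M i (j+1) - M i j)^2
      ≤ 8 * ∑ i ∈ range h, ∑ j ∈ range w, (M i j)^2 := by
  have T1 : ∑ i ∈ range (h-1), ∑ j ∈ range w, (M (i+1) j)^2
      ≤ ∑ i ∈ range h, ∑ j ∈ range w, (M i j)^2 := by
    have := Finset.sum_range_succ' (fun i => ∑ j ∈ range w, (M i j)^2) (h-1)
    rw [show (h-1)+1 = h by omega] at this
    rw [this]
    have : (0:ℝ) ≤ ∑ j ∈ range w, (M 0 j)^2 := by positivity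
    linarith
  have T2 : ∑ i ∈ range (h-1), ∑ j ∈ range w, (M i j)^2
      ≤ ∑ i ∈ range h, ∑ j ∈ range w, (M i j)^2 := by
    refine Finset.sum_le_sum_of_subset_of_nonneg
      (Finset.range_subset_range.2 (Nat.sub_le h 1)) fun i _ _ => by positivity
  have T3 : ∀ i, ∑ j ∈ range (w-1), (M i (j+1))^2 ≤ ∑ j ∈ range w, (M i j)^2 := by
    intro i
    have := Finset.sum_range_succ' (fun j => (M i j)^2) (w-1)
    rw [show (w-1)+1 = w by omega] at this
    rw [this]
    nlinarith [sq_nonneg (M i 0)]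
  have T4 : ∀ i, ∑ j ∈ range (w-1), (M i j)^2 ≤ ∑ j ∈ range w, (M i j)^2 := by
    intro i
    refine Finset.sum_le_sum_of_subset_of_nonneg
      (Finset.range_subset_range.2 (Nat.sub_le w 1)) fun j _ _ => by positivity
  have E1 : ∑ i ∈ range (h-1), ∑ j ∈ range w, (M (i+1) j - M i j)^2
      ≤ 2 * (∑ i ∈ range (h-1), ∑ j ∈ range w, (M (i+1) j)^2)
        + 2 * ∑ i ∈ range (h-1), ∑ j ∈ range w, (M i j)^2 := by
    have : ∀ i ∈ range (h-1), ∑ j ∈ range w, (M (i+1) j - M i j)^2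
        ≤ ∑ j ∈ range w, (2 * (M (i+1) j)^2 + 2 * (M i j)^2) :=
      fun i _ => Finset.sum_le_sum fun j _ => by nlinarith [sq_nonneg (M (i+1) j + M i j)]
    calc ∑ i ∈ range (h-1), ∑ j ∈ range w, (M (i+1) j - M i j)^2
        ≤ ∑ i ∈ range (h-1), ∑ j ∈ range w, (2 * (M (i+1) j)^2 + 2 * (M i j)^2) :=
          Finset.sum_le_sum this
      _ = _ := by simp only [Finset.sum_add_distrib, Finset.mul_sum]
  have E2 : ∑ i ∈ range h, ∑ j ∈ range (w-1), (M i (j+1) - M i j)^2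
      ≤ 2 * (∑ i ∈ range h, ∑ j ∈ range (w-1), (M i (j+1))^2)
        + 2 * ∑ i ∈ range h, ∑ j ∈ range (w-1), (M i j)^2 := by
    have : ∀ i ∈ range h, ∑ j ∈ range (w-1), (M i (j+1) - M i j)^2
        ≤ ∑ j ∈ range (w-1), (2 * (M i (j+1))^2 + 2 * (M i j)^2) :=
      fun i _ => Finset.sum_le_sum fun j _ => by nlinarith [sq_nonneg (M i (j+1) + M i j)]
    calc ∑ i ∈ range h, ∑ j ∈ range (w-1), (M i (j+1) - M i j)^2
        ≤ ∑ i ∈ range h, ∑ j ∈ range (w-1), (2 * (M i (j+1))^2 + 2 * (M i j)^2) :=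
          Finset.sum_le_sum this
      _ = _ := by simp only [Finset.sum_add_distrib, Finset.mul_sum]
  have T3' : ∑ i ∈ range h, ∑ j ∈ range (w-1), (M i (j+1))^2
      ≤ ∑ i ∈ range h, ∑ j ∈ range w, (M i j)^2 :=
    Finset.sum_le_sum fun i _ => T3 i
  have T4' : ∑ i ∈ range h, ∑ j ∈ range (w-1), (M i j)^2
      ≤ ∑ i ∈ range h, ∑ j ∈ range w, (M i j)^2 :=
    Finset.sum_le_sum fun i _ => T4 i
  linarith


variable (h w : ℕ)

/-- The dual variable space: pairs `(p, q)` flattened into one Euclidean space. -/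
abbrev DualSpace := EuclideanSpace ℝ ((Fin (h - 1) × Fin w) ⊕ (Fin h × Fin (w - 1)))

/-- The `p`-component of a flattened dual variable. -/
def pOf (x : DualSpace h w) : Fin (h - 1) → Fin w → ℝ := fun i j => x (Sum.inl (i, j))

/-- The `q`-component of a flattened dual variable. -/
def qOf (x : DualSpace h w) : Fin h → Fin (w - 1) → ℝ := fun i j => x (Sum.inr (i, j))

/-- The dual objective
`H(p,q) = ½(‖d - β𝓛(p,q)‖² - ‖H_C(d - β𝓛(p,q))‖²) + β[Tr(pᵀE₁) + Tr(qᵀE₂)]`. -/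
def dualObj (d : Fin h → Fin w → ℝ) (β : ℝ)
    (E1 : Fin (h - 1) → Fin w → ℝ) (E2 : Fin h → Fin (w - 1) → ℝ)
    (x : DualSpace h w) : ℝ :=
  (1 / 2) * ((∑ i, ∑ j, (d i j - β * Lop h w (pOf h w x) (qOf h w x) i j) ^ 2) -
      ∑ i, ∑ j, ((d i j - β * Lop h w (pOf h w x) (qOf h w x) i j) -
        clampC h w (fun i j => d i j - β * Lop h w (pOf h w x) (qOf h w x) i j) i j) ^ 2) +
    β * ((∑ i, ∑ j, pOf h w x i j * E1 i j) + ∑ i, ∑ j, qOf h w x i j * E2 i j)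

/-- The claimed gradient `∇H(p,q) = -β 𝓛ᵀ(P_C(d - β𝓛(p,q))) + β(E₁, E₂)`. -/
def dualGrad (d : Fin h → Fin w → ℝ) (β : ℝ)
    (E1 : Fin (h - 1) → Fin w → ℝ) (E2 : Fin h → Fin (w - 1) → ℝ)
    (x : DualSpace h w) : DualSpace h w :=
  (WithLp.equiv 2 _).symm fun s =>
    match s with
    | Sum.inl (i, j) =>
        -β * LtP h w (clampC h w
          (fun i j => d i j - β * Lop h w (pOf h w x) (qOf h w x) i j)) i j + β * E1 i j
    | Sum.inr (i, j) =>
        -β * LtQ h w (clampC h w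
          (fun i j => d i j - β * Lop h w (pOf h w x) (qOf h w x) i j)) i j + β * E2 i j

lemma finsum2 (n m : ℕ) (g : ℕ → ℕ → ℝ) :
    ∑ i : Fin n, ∑ j : Fin m, g i.1 j.1 = ∑ i ∈ range n, ∑ j ∈ range m, g i j := by
  rw [Fin.sum_univ_eq_sum_range (fun i => ∑ j : Fin m, g i j.1) n]
  exact Finset.sum_congr rfl fun i _ => Fin.sum_univ_eq_sum_range (fun j => g i j) m

def Ufun (h w : ℕ) (d : Fin h → Fin w → ℝ) (β : ℝ) (x : DualSpace h w) (i j : ℕ) : ℝ :=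
  mE h w d i j - β * LopN h w (pOf h w x) (qOf h w x) i j

variable (d : Fin h → Fin w → ℝ) (β : ℝ)
  (E1 : Fin (h - 1) → Fin w → ℝ) (E2 : Fin h → Fin (w - 1) → ℝ)

lemma U_apply (x : DualSpace h w) (a : Fin h) (b : Fin w) :
    d a b - β * Lop h w (pOf h w x) (qOf h w x) a b = Ufun h w d β x a.1 b.1 := by
  unfold Ufun
  rw [mE_apply]
  rfl

lemma comb2 {n m : ℕ} (a b : ℝ) (F G : ℕ → ℕ → ℝ) :
    ∑ i ∈ range n, ∑ j ∈ range m, (a * F i j + b * G i j)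
      = a * (∑ i ∈ range n, ∑ j ∈ range m, F i j)
        + b * (∑ i ∈ range n, ∑ j ∈ range m, G i j) := by
  simp only [Finset.sum_add_distrib, Finset.mul_sum]

lemma dualObj_eq (x : DualSpace h w) : dualObj h w d β E1 E2 x =
    (1/2) * ((∑ i ∈ range h, ∑ j ∈ range w, (Ufun h w d β x i j)^2)
      - ∑ i ∈ range h, ∑ j ∈ range w,
          (Ufun h w d β x i j - min 1 (max 0 (Ufun h w d β x i j)))^2)
    + β * ((∑ i ∈ range (h-1), ∑ j ∈ range w,
          mE (h-1) w (pOf h w x) i j * mE (h-1) w E1 i j)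
      + ∑ i ∈ range h, ∑ j ∈ range (w-1),
          mE h (w-1) (qOf h w x) i j * mE h (w-1) E2 i j) := by
  unfold dualObj
  have h1 : (∑ i, ∑ j, (d i j - β * Lop h w (pOf h w x) (qOf h w x) i j)^2)
      = ∑ i ∈ range h, ∑ j ∈ range w, (Ufun h w d β x i j)^2 := by
    rw [← finsum2 h w (fun i j => (Ufun h w d β x i j)^2)]
    exact Fintype.sum_congr _ _ fun a => Fintype.sum_congr _ _ fun b => by
      rw [U_apply]
  have h2 : (∑ i, ∑ j, ((d i j - β * Lop h w (pOf h w x) (qOf h w x) i j) -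
        clampC h w (fun i j => d i j - β * Lop h w (pOf h w x) (qOf h w x) i j) i j)^2)
      = ∑ i ∈ range h, ∑ j ∈ range w,
          (Ufun h w d β x i j - min 1 (max 0 (Ufun h w d β x i j)))^2 := by
    rw [← finsum2 h w (fun i j =>
      (Ufun h w d β x i j - min 1 (max 0 (Ufun h w d β x i j)))^2)]
    exact Fintype.sum_congr _ _ fun a => Fintype.sum_congr _ _ fun b => by
      simp only [clampC]
      rw [U_apply]
  have h3 : (∑ i, ∑ j, pOf h w x i j * E1 i j)
      = ∑ i ∈ range (h-1), ∑ j ∈ range w,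
          mE (h-1) w (pOf h w x) i j * mE (h-1) w E1 i j := by
    rw [← finsum2 (h-1) w (fun i j => mE (h-1) w (pOf h w x) i j * mE (h-1) w E1 i j)]
    exact Fintype.sum_congr _ _ fun a => Fintype.sum_congr _ _ fun b => by
      rw [mE_apply, mE_apply]
  have h4 : (∑ i, ∑ j, qOf h w x i j * E2 i j)
      = ∑ i ∈ range h, ∑ j ∈ range (w-1),
          mE h (w-1) (qOf h w x) i j * mE h (w-1) E2 i j := by
    rw [← finsum2 h (w-1) (fun i j => mE h (w-1) (qOf h w x) i j * mE h (w-1) E2 i j)]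
    exact Fintype.sum_congr _ _ fun a => Fintype.sum_congr _ _ fun b => by
      rw [mE_apply, mE_apply]
  rw [h1, h2, h3, h4]

lemma inner_grad (hh : 0 < h) (hw : 0 < w) (x z : DualSpace h w) :
    (inner ℝ (dualGrad h w d β E1 E2 x) z : ℝ)
      = -β * (∑ i ∈ range h, ∑ j ∈ range w,
            min 1 (max 0 (Ufun h w d β x i j))
              * LopN h w (pOf h w z) (qOf h w z) i j)
        + β * ((∑ i ∈ range (h-1), ∑ j ∈ range w,
              mE (h-1) w E1 i j * mE (h-1) w (pOf h w z) i j)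
          + ∑ i ∈ range h, ∑ j ∈ range (w-1),
              mE h (w-1) E2 i j * mE h (w-1) (qOf h w z) i j) := by
  set M : ℕ → ℕ → ℝ := fun i j => min 1 (max 0 (Ufun h w d β x i j)) with hMdef
  have step1 : (inner ℝ (dualGrad h w d β E1 E2 x) z : ℝ)
      = (∑ i ∈ range (h-1), ∑ j ∈ range w,
          ((-β) * ((M (i+1) j - M i j) * mE (h-1) w (pOf h w z) i j)
            + β * (mE (h-1) w E1 i j * mE (h-1) w (pOf h w z) i j)))
        + ∑ i ∈ range h, ∑ j ∈ range (w-1),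
          ((-β) * ((M i (j+1) - M i j) * mE h (w-1) (qOf h w z) i j)
            + β * (mE h (w-1) E2 i j * mE h (w-1) (qOf h w z) i j)) := by
    rw [PiLp.inner_apply]
    simp only [RCLike.inner_apply, conj_trivial]
    rw [Fintype.sum_sum_type]
    simp only [Fintype.sum_prod_type]
    rw [← finsum2 (h-1) w (fun i j =>
        ((-β) * ((M (i+1) j - M i j) * mE (h-1) w (pOf h w z) i j)
          + β * (mE (h-1) w E1 i j * mE (h-1) w (pOf h w z) i j))),
      ← finsum2 h (w-1) (fun i j =>
        ((-β) * ((M i (j+1) - M i j) * mE h (w-1) (qOf h w z) i j)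
          + β * (mE h (w-1) E2 i j * mE h (w-1) (qOf h w z) i j)))]
    congr 1
    · refine Fintype.sum_congr _ _ fun a => Fintype.sum_congr _ _ fun b => ?_
      have e1 : dualGrad h w d β E1 E2 x (Sum.inl (a, b))
          = -β * LtP h w (clampC h w
              (fun i j => d i j - β * Lop h w (pOf h w x) (qOf h w x) i j)) a b
            + β * E1 a b := rfl
      have e2 : LtP h w (clampC h w
          (fun i j => d i j - β * Lop h w (pOf h w x) (qOf h w x) i j)) a b
          = M (a.1+1) b.1 - M a.1 b.1 := by
        simp only [LtP, clampC]
        rw [U_apply h w d β x ⟨a.1+1, by omega⟩ b, U_apply h w d β x ⟨a.1, by omega⟩ b]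
      have e3 : (z (Sum.inl (a, b)) : ℝ) = mE (h-1) w (pOf h w z) a.1 b.1 := by
        rw [mE_apply]; rfl
      rw [e1, e2, e3, show E1 a b = mE (h-1) w E1 a.1 b.1 from (mE_apply E1 a b).symm]
      ring
    · refine Fintype.sum_congr _ _ fun a => Fintype.sum_congr _ _ fun b => ?_
      have e1 : dualGrad h w d β E1 E2 x (Sum.inr (a, b))
          = -β * LtQ h w (clampC h w
              (fun i j => d i j - β * Lop h w (pOf h w x) (qOf h w x) i j)) a b
            + β * E2 a b := rfl
      have e2 : LtQ h w (clampC h w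
          (fun i j => d i j - β * Lop h w (pOf h w x) (qOf h w x) i j)) a b
          = M a.1 (b.1+1) - M a.1 b.1 := by
        simp only [LtQ, clampC]
        rw [U_apply h w d β x a ⟨b.1+1, by omega⟩, U_apply h w d β x a ⟨b.1, by omega⟩]
      have e3 : (z (Sum.inr (a, b)) : ℝ) = mE h (w-1) (qOf h w z) a.1 b.1 := by
        rw [mE_apply]; rfl
      rw [e1, e2, e3, show E2 a b = mE h (w-1) E2 a.1 b.1 from (mE_apply E2 a b).symm]
      ring
  rw [step1, comb2, comb2]
  have key := adj h w hh hw M (pOf h w z) (qOf h w z)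
  rw [pE_eq, qE_eq] at key
  simp only [hMdef] at key ⊢
  linear_combination β * key

lemma normsq (z : DualSpace h w) : ‖z‖^2 =
    (∑ i ∈ range (h-1), ∑ j ∈ range w, (mE (h-1) w (pOf h w z) i j)^2)
      + ∑ i ∈ range h, ∑ j ∈ range (w-1), (mE h (w-1) (qOf h w z) i j)^2 := by
  rw [EuclideanSpace.norm_eq, Real.sq_sqrt (by positivity)]
  simp only [Real.norm_eq_abs, sq_abs]
  rw [Fintype.sum_sum_type]
  simp only [Fintype.sum_prod_type]
  congr 1
  · rw [← finsum2 (h-1) w (fun i j => (mE (h-1) w (pOf h w z) i j)^2)]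
    exact Fintype.sum_congr _ _ fun a => Fintype.sum_congr _ _ fun b => by
      rw [mE_apply]; rfl
  · rw [← finsum2 h (w-1) (fun i j => (mE h (w-1) (qOf h w z) i j)^2)]
    exact Fintype.sum_congr _ _ fun a => Fintype.sum_congr _ _ fun b => by
      rw [mE_apply]; rfl

lemma mE_pOf_sub (x y : DualSpace h w) (i j : ℕ) :
    mE (h-1) w (pOf h w (x - y)) i j
      = mE (h-1) w (pOf h w x) i j - mE (h-1) w (pOf h w y) i j := by
  rw [show pOf h w (x - y) = fun a b => pOf h w x a b - pOf h w y a b from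
    funext fun a => funext fun b => by simp [pOf]]
  exact mE_sub _ _ i j

lemma mE_qOf_sub (x y : DualSpace h w) (i j : ℕ) :
    mE h (w-1) (qOf h w (x - y)) i j
      = mE h (w-1) (qOf h w x) i j - mE h (w-1) (qOf h w y) i j := by
  rw [show qOf h w (x - y) = fun a b => qOf h w x a b - qOf h w y a b from
    funext fun a => funext fun b => by simp [qOf]]
  exact mE_sub _ _ i j

lemma LopN_sub (x y : DualSpace h w) (i j : ℕ) :
    LopN h w (pOf h w (x - y)) (qOf h w (x - y)) i j
      = LopN h w (pOf h w x) (qOf h w x) i j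
        - LopN h w (pOf h w y) (qOf h w y) i j := by
  unfold LopN
  simp only [pE_eq, qE_eq, mE_pOf_sub, mE_qOf_sub]
  split_ifs <;> ring

def Rterm (d : Fin h → Fin w → ℝ) (β : ℝ) (x y : DualSpace h w) (i j : ℕ) : ℝ :=
  (1/2) * ((Ufun h w d β y i j)^2
      - (Ufun h w d β y i j - min 1 (max 0 (Ufun h w d β y i j)))^2)
    - (1/2) * ((Ufun h w d β x i j)^2
      - (Ufun h w d β x i j - min 1 (max 0 (Ufun h w d β x i j)))^2)
    - min 1 (max 0 (Ufun h w d β x i j)) * (Ufun h w d β y i j - Ufun h w d β x i j)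

lemma Rterm_abs (d : Fin h → Fin w → ℝ) (β : ℝ) (x y : DualSpace h w) (i j : ℕ) :
    |Rterm h w d β x y i j| ≤ (1/2) * (Ufun h w d β y i j - Ufun h w d β x i j)^2 := by
  unfold Rterm
  exact phi_bound _ _

lemma key_taylor (hh : 0 < h) (hw : 0 < w) (x y : DualSpace h w) :
    |dualObj h w d β E1 E2 y - dualObj h w d β E1 E2 x
        - (inner ℝ (dualGrad h w d β E1 E2 x) (y - x) : ℝ)|
      ≤ 4 * β^2 * ‖y - x‖^2 := by
  have hUV : ∀ i j, Ufun h w d β y i j - Ufun h w d β x i j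
      = -β * LopN h w (pOf h w (y - x)) (qOf h w (y - x)) i j := by
    intro i j
    rw [LopN_sub]
    unfold Ufun
    ring
  have trP : (∑ i ∈ range (h-1), ∑ j ∈ range w,
        mE (h-1) w (pOf h w y) i j * mE (h-1) w E1 i j)
      - ∑ i ∈ range (h-1), ∑ j ∈ range w,
        mE (h-1) w (pOf h w x) i j * mE (h-1) w E1 i j
      = ∑ i ∈ range (h-1), ∑ j ∈ range w,
        mE (h-1) w E1 i j * mE (h-1) w (pOf h w (y - x)) i j := by
    rw [← Finset.sum_sub_distrib]
    refine Finset.sum_congr rfl fun i _ => ?_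
    rw [← Finset.sum_sub_distrib]
    refine Finset.sum_congr rfl fun j _ => ?_
    rw [mE_pOf_sub]
    ring
  have trQ : (∑ i ∈ range h, ∑ j ∈ range (w-1),
        mE h (w-1) (qOf h w y) i j * mE h (w-1) E2 i j)
      - ∑ i ∈ range h, ∑ j ∈ range (w-1),
        mE h (w-1) (qOf h w x) i j * mE h (w-1) E2 i j
      = ∑ i ∈ range h, ∑ j ∈ range (w-1),
        mE h (w-1) E2 i j * mE h (w-1) (qOf h w (y - x)) i j := by
    rw [← Finset.sum_sub_distrib]
    refine Finset.sum_congr rfl fun i _ => ?_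
    rw [← Finset.sum_sub_distrib]
    refine Finset.sum_congr rfl fun j _ => ?_
    rw [mE_qOf_sub]
    ring
  have RHSsplit : (∑ i ∈ range h, ∑ j ∈ range w, Rterm h w d β x y i j)
      = (1/2) * ((∑ i ∈ range h, ∑ j ∈ range w, (Ufun h w d β y i j)^2)
          - ∑ i ∈ range h, ∑ j ∈ range w,
              (Ufun h w d β y i j - min 1 (max 0 (Ufun h w d β y i j)))^2)
        - (1/2) * ((∑ i ∈ range h, ∑ j ∈ range w, (Ufun h w d β x i j)^2)
          - ∑ i ∈ range h, ∑ j ∈ range w,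
              (Ufun h w d β x i j - min 1 (max 0 (Ufun h w d β x i j)))^2)
        + β * ∑ i ∈ range h, ∑ j ∈ range w,
            min 1 (max 0 (Ufun h w d β x i j))
              * LopN h w (pOf h w (y - x)) (qOf h w (y - x)) i j := by
    have point : ∀ i ∈ range h, ∀ j ∈ range w, Rterm h w d β x y i j
        = (1/2) * (Ufun h w d β y i j)^2
          + (-(1/2)) * (Ufun h w d β y i j - min 1 (max 0 (Ufun h w d β y i j)))^2
          + (-(1/2)) * (Ufun h w d β x i j)^2
          + (1/2) * (Ufun h w d β x i j - min 1 (max 0 (Ufun h w d β x i j)))^2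
          + β * (min 1 (max 0 (Ufun h w d β x i j))
              * LopN h w (pOf h w (y - x)) (qOf h w (y - x)) i j) := by
      intro i _ j _
      unfold Rterm
      linear_combination (-(min 1 (max 0 (Ufun h w d β x i j)))) * hUV i j
    rw [Finset.sum_congr rfl fun i hi => Finset.sum_congr rfl fun j hj => point i hi j hj]
    simp only [Finset.sum_add_distrib, ← Finset.mul_sum]
    ring
  have iden : dualObj h w d β E1 E2 y - dualObj h w d β E1 E2 x
      - (inner ℝ (dualGrad h w d β E1 E2 x) (y - x) : ℝ)
      = ∑ i ∈ range h, ∑ j ∈ range w, Rterm h w d β x y i j := by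
    rw [dualObj_eq, dualObj_eq, inner_grad h w d β E1 E2 hh hw, RHSsplit]
    linear_combination β * trP + β * trQ
  rw [iden]
  have lb := lop_bound h w hh hw (pOf h w (y - x)) (qOf h w (y - x))
  rw [pE_eq, qE_eq] at lb
  calc |∑ i ∈ range h, ∑ j ∈ range w, Rterm h w d β x y i j|
      ≤ ∑ i ∈ range h, |∑ j ∈ range w, Rterm h w d β x y i j| :=
        Finset.abs_sum_le_sum_abs _ _
    _ ≤ ∑ i ∈ range h, ∑ j ∈ range w, |Rterm h w d β x y i j| :=
        Finset.sum_le_sum fun i _ => Finset.abs_sum_le_sum_abs _ _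
    _ ≤ ∑ i ∈ range h, ∑ j ∈ range w,
          (β^2/2) * (LopN h w (pOf h w (y - x)) (qOf h w (y - x)) i j)^2 := by
        refine Finset.sum_le_sum fun i _ => Finset.sum_le_sum fun j _ => ?_
        refine (Rterm_abs h w d β x y i j).trans (le_of_eq ?_)
        rw [hUV i j]
        ring
    _ = (β^2/2) * ∑ i ∈ range h, ∑ j ∈ range w,
          (LopN h w (pOf h w (y - x)) (qOf h w (y - x)) i j)^2 := by
        simp only [← Finset.mul_sum]
    _ ≤ (β^2/2) * (8 * ((∑ i ∈ range (h-1), ∑ j ∈ range w,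
            (mE (h-1) w (pOf h w (y - x)) i j)^2)
          + ∑ i ∈ range h, ∑ j ∈ range (w-1),
            (mE h (w-1) (qOf h w (y - x)) i j)^2)) :=
        mul_le_mul_of_nonneg_left lb (by positivity)
    _ = 4 * β^2 * ‖y - x‖^2 := by
        rw [normsq h w (y - x)]
        ring

lemma ltP_clamp (x : DualSpace h w) (a : Fin (h-1)) (b : Fin w) :
    LtP h w (clampC h w
        (fun i j => d i j - β * Lop h w (pOf h w x) (qOf h w x) i j)) a b
      = min 1 (max 0 (Ufun h w d β x (a.1+1) b.1))
        - min 1 (max 0 (Ufun h w d β x a.1 b.1)) := by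
  simp only [LtP, clampC]
  rw [U_apply h w d β x ⟨a.1+1, by omega⟩ b, U_apply h w d β x ⟨a.1, by omega⟩ b]

lemma ltQ_clamp (x : DualSpace h w) (a : Fin h) (b : Fin (w-1)) :
    LtQ h w (clampC h w
        (fun i j => d i j - β * Lop h w (pOf h w x) (qOf h w x) i j)) a b
      = min 1 (max 0 (Ufun h w d β x a.1 (b.1+1)))
        - min 1 (max 0 (Ufun h w d β x a.1 b.1)) := by
  simp only [LtQ, clampC]
  rw [U_apply h w d β x a ⟨b.1+1, by omega⟩, U_apply h w d β x a ⟨b.1, by omega⟩]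

lemma grad_sub_p (x y : DualSpace h w) (a : Fin (h-1)) (b : Fin w) :
    (dualGrad h w d β E1 E2 x - dualGrad h w d β E1 E2 y) (Sum.inl (a, b))
      = -β * ((min 1 (max 0 (Ufun h w d β x (a.1+1) b.1))
            - min 1 (max 0 (Ufun h w d β y (a.1+1) b.1)))
          - (min 1 (max 0 (Ufun h w d β x a.1 b.1))
            - min 1 (max 0 (Ufun h w d β y a.1 b.1)))) := by
  have e : (dualGrad h w d β E1 E2 x - dualGrad h w d β E1 E2 y) (Sum.inl (a, b))
      = dualGrad h w d β E1 E2 x (Sum.inl (a, b))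
        - dualGrad h w d β E1 E2 y (Sum.inl (a, b)) := rfl
  rw [e, show dualGrad h w d β E1 E2 x (Sum.inl (a, b))
      = -β * LtP h w (clampC h w
          (fun i j => d i j - β * Lop h w (pOf h w x) (qOf h w x) i j)) a b
        + β * E1 a b from rfl,
    show dualGrad h w d β E1 E2 y (Sum.inl (a, b))
      = -β * LtP h w (clampC h w
          (fun i j => d i j - β * Lop h w (pOf h w y) (qOf h w y) i j)) a b
        + β * E1 a b from rfl,
    ltP_clamp, ltP_clamp]
  ring

lemma grad_sub_q (x y : DualSpace h w) (a : Fin h) (b : Fin (w-1)) :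
    (dualGrad h w d β E1 E2 x - dualGrad h w d β E1 E2 y) (Sum.inr (a, b))
      = -β * ((min 1 (max 0 (Ufun h w d β x a.1 (b.1+1)))
            - min 1 (max 0 (Ufun h w d β y a.1 (b.1+1))))
          - (min 1 (max 0 (Ufun h w d β x a.1 b.1))
            - min 1 (max 0 (Ufun h w d β y a.1 b.1)))) := by
  have e : (dualGrad h w d β E1 E2 x - dualGrad h w d β E1 E2 y) (Sum.inr (a, b))
      = dualGrad h w d β E1 E2 x (Sum.inr (a, b))
        - dualGrad h w d β E1 E2 y (Sum.inr (a, b)) := rfl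
  rw [e, show dualGrad h w d β E1 E2 x (Sum.inr (a, b))
      = -β * LtQ h w (clampC h w
          (fun i j => d i j - β * Lop h w (pOf h w x) (qOf h w x) i j)) a b
        + β * E2 a b from rfl,
    show dualGrad h w d β E1 E2 y (Sum.inr (a, b))
      = -β * LtQ h w (clampC h w
          (fun i j => d i j - β * Lop h w (pOf h w y) (qOf h w y) i j)) a b
        + β * E2 a b from rfl,
    ltQ_clamp, ltQ_clamp]
  ring

lemma key_lip (hh : 0 < h) (hw : 0 < w) (x y : DualSpace h w) :
    ‖dualGrad h w d β E1 E2 x - dualGrad h w d β E1 E2 y‖ ≤ 8 * β^2 * ‖x - y‖ := by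
  set D : ℕ → ℕ → ℝ := fun i j =>
    min 1 (max 0 (Ufun h w d β x i j)) - min 1 (max 0 (Ufun h w d β y i j)) with hD
  have hUV : ∀ i j, Ufun h w d β x i j - Ufun h w d β y i j
      = -β * LopN h w (pOf h w (x - y)) (qOf h w (x - y)) i j := by
    intro i j
    rw [LopN_sub]
    unfold Ufun
    ring
  have hnorm : ‖dualGrad h w d β E1 E2 x - dualGrad h w d β E1 E2 y‖^2
      = β^2 * ((∑ i ∈ range (h-1), ∑ j ∈ range w, (D (i+1) j - D i j)^2)
        + ∑ i ∈ range h, ∑ j ∈ range (w-1), (D i (j+1) - D i j)^2) := by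
    rw [normsq]
    have e1 : ∑ i ∈ range (h-1), ∑ j ∈ range w,
        (mE (h-1) w (pOf h w (dualGrad h w d β E1 E2 x - dualGrad h w d β E1 E2 y)) i j)^2
        = ∑ i ∈ range (h-1), ∑ j ∈ range w, β^2 * (D (i+1) j - D i j)^2 := by
      refine Finset.sum_congr rfl fun i hi => Finset.sum_congr rfl fun j hj => ?_
      rw [Finset.mem_range] at hi hj
      rw [show mE (h-1) w
            (pOf h w (dualGrad h w d β E1 E2 x - dualGrad h w d β E1 E2 y)) i j
          = pOf h w (dualGrad h w d β E1 E2 x - dualGrad h w d β E1 E2 y) ⟨i,hi⟩ ⟨j,hj⟩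
          from mE_apply _ ⟨i,hi⟩ ⟨j,hj⟩]
      rw [show pOf h w (dualGrad h w d β E1 E2 x - dualGrad h w d β E1 E2 y) ⟨i,hi⟩ ⟨j,hj⟩
          = (dualGrad h w d β E1 E2 x - dualGrad h w d β E1 E2 y) (Sum.inl (⟨i,hi⟩,⟨j,hj⟩))
          from rfl]
      rw [grad_sub_p h w d β E1 E2 x y ⟨i,hi⟩ ⟨j,hj⟩]
      simp only [hD]
      ring
    have e2 : ∑ i ∈ range h, ∑ j ∈ range (w-1),
        (mE h (w-1) (qOf h w (dualGrad h w d β E1 E2 x - dualGrad h w d β E1 E2 y)) i j)^2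
        = ∑ i ∈ range h, ∑ j ∈ range (w-1), β^2 * (D i (j+1) - D i j)^2 := by
      refine Finset.sum_congr rfl fun i hi => Finset.sum_congr rfl fun j hj => ?_
      rw [Finset.mem_range] at hi hj
      rw [show mE h (w-1)
            (qOf h w (dualGrad h w d β E1 E2 x - dualGrad h w d β E1 E2 y)) i j
          = qOf h w (dualGrad h w d β E1 E2 x - dualGrad h w d β E1 E2 y) ⟨i,hi⟩ ⟨j,hj⟩
          from mE_apply _ ⟨i,hi⟩ ⟨j,hj⟩]
      rw [show qOf h w (dualGrad h w d β E1 E2 x - dualGrad h w d β E1 E2 y) ⟨i,hi⟩ ⟨j,hj⟩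
          = (dualGrad h w d β E1 E2 x - dualGrad h w d β E1 E2 y) (Sum.inr (⟨i,hi⟩,⟨j,hj⟩))
          from rfl]
      rw [grad_sub_q h w d β E1 E2 x y ⟨i,hi⟩ ⟨j,hj⟩]
      simp only [hD]
      ring
    rw [e1, e2]
    simp only [← Finset.mul_sum]
    ring
  have lt := lt_bound h w hh hw D
  have clsq : (∑ i ∈ range h, ∑ j ∈ range w, (D i j)^2)
      ≤ ∑ i ∈ range h, ∑ j ∈ range w, (Ufun h w d β x i j - Ufun h w d β y i j)^2 := by
    refine Finset.sum_le_sum fun i _ => Finset.sum_le_sum fun j _ => ?_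
    simp only [hD]
    exact cl_sq _ _
  have e3 : (∑ i ∈ range h, ∑ j ∈ range w,
        (Ufun h w d β x i j - Ufun h w d β y i j)^2)
      = β^2 * ∑ i ∈ range h, ∑ j ∈ range w,
          (LopN h w (pOf h w (x - y)) (qOf h w (x - y)) i j)^2 := by
    have e3' : ∀ i ∈ range h, ∀ j ∈ range w,
        (Ufun h w d β x i j - Ufun h w d β y i j)^2
          = β^2 * (LopN h w (pOf h w (x - y)) (qOf h w (x - y)) i j)^2 := by
      intro i _ j _
      rw [hUV i j]
      ring
    rw [Finset.sum_congr rfl fun i hi => Finset.sum_congr rfl fun j hj => e3' i hi j hj]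
    simp only [← Finset.mul_sum]
  have lb := lop_bound h w hh hw (pOf h w (x - y)) (qOf h w (x - y))
  rw [pE_eq, qE_eq] at lb
  have nrm := normsq h w (x - y)
  have final : ‖dualGrad h w d β E1 E2 x - dualGrad h w d β E1 E2 y‖^2
      ≤ (8 * β^2 * ‖x - y‖)^2 := by
    rw [hnorm]
    calc β^2 * ((∑ i ∈ range (h-1), ∑ j ∈ range w, (D (i+1) j - D i j)^2)
          + ∑ i ∈ range h, ∑ j ∈ range (w-1), (D i (j+1) - D i j)^2)
        ≤ β^2 * (8 * ∑ i ∈ range h, ∑ j ∈ range w, (D i j)^2) :=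
          mul_le_mul_of_nonneg_left lt (sq_nonneg β)
      _ ≤ β^2 * (8 * ∑ i ∈ range h, ∑ j ∈ range w,
            (Ufun h w d β x i j - Ufun h w d β y i j)^2) := by
          have : (8:ℝ) * ∑ i ∈ range h, ∑ j ∈ range w, (D i j)^2
              ≤ 8 * ∑ i ∈ range h, ∑ j ∈ range w,
                  (Ufun h w d β x i j - Ufun h w d β y i j)^2 := by linarith
          exact mul_le_mul_of_nonneg_left this (sq_nonneg β)
      _ = β^2 * (8 * (β^2 * ∑ i ∈ range h, ∑ j ∈ range w,
            (LopN h w (pOf h w (x - y)) (qOf h w (x - y)) i j)^2)) := by rw [e3]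
      _ ≤ β^2 * (8 * (β^2 * (8 * ((∑ i ∈ range (h-1), ∑ j ∈ range w,
              (mE (h-1) w (pOf h w (x - y)) i j)^2)
            + ∑ i ∈ range h, ∑ j ∈ range (w-1),
              (mE h (w-1) (qOf h w (x - y)) i j)^2)))) := by
          have := mul_le_mul_of_nonneg_left lb (sq_nonneg β)
          have := mul_le_mul_of_nonneg_left this (by norm_num : (0:ℝ) ≤ 8)
          exact mul_le_mul_of_nonneg_left this (sq_nonneg β)
      _ = (8 * β^2 * ‖x - y‖)^2 := by
          rw [mul_pow, mul_pow, nrm]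
          ring
  exact le_of_pow_le_pow_left₀ two_ne_zero (by positivity) final


/-- The dual objective is differentiable with gradient
`-β𝓛ᵀ(P_C(d - β𝓛(p,q))) + β(E₁,E₂)`, and this gradient is Lipschitz
continuous with constant at most `8β²`. -/
theorem dualObj_gradient_and_lipschitz
    (hh : 0 < h) (hw : 0 < w)
    (d : Fin h → Fin w → ℝ) (β : ℝ) (hβ : 0 < β)
    (E1 : Fin (h - 1) → Fin w → ℝ) (E2 : Fin h → Fin (w - 1) → ℝ) :
    (∀ x : DualSpace h w,
        HasGradientAt (dualObj h w d β E1 E2) (dualGrad h w d β E1 E2 x) x) ∧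
      ∀ x y : DualSpace h w,
        ‖dualGrad h w d β E1 E2 x - dualGrad h w d β E1 E2 y‖ ≤
          8 * β ^ 2 * ‖x - y‖ := by

  constructor
  · intro x
    rw [hasGradientAt_iff_isLittleO, Asymptotics.isLittleO_iff]
    intro c hc
    have hr : (0:ℝ) < c / (4*β^2+1) := by positivity
    filter_upwards [Metric.ball_mem_nhds x hr] with y hy
    rw [Metric.mem_ball, dist_eq_norm] at hy
    have hb := key_taylor h w d β E1 E2 hh hw x y
    have h1 : 4*β^2 * ‖y - x‖ ≤ c := by
      have h2 : ‖y - x‖ ≤ c/(4*β^2+1) := le_of_lt hy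
      rw [le_div_iff₀ (by positivity)] at h2
      nlinarith [norm_nonneg (y - x)]
    rw [Real.norm_eq_abs]
    nlinarith [norm_nonneg (y - x), abs_nonneg (dualObj h w d β E1 E2 y
      - dualObj h w d β E1 E2 x - (inner ℝ (dualGrad h w d β E1 E2 x) (y - x) : ℝ))]
  · intro x y
    exact key_lip h w d β E1 E2 hh hw x y

end
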